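/- («Six» construction.) Let n_1, …, n_6 be positive natural numbers and let P_{n_i} ⊆ AG(n_i,3) (i = 1,…,6) be complete, b-saturated P-sets. Form the ten concatenated sets A_1 = P_{n_1}P_{n_2}P_{n_3}B_{n_4}B_{n_5}B_{n_6}, A_2 = P_{n_1}P_{n_2}B_{n_3}B_{n_4}B_{n_5}P_{n_6}, A_3 = P_{n_1}B_{n_2}P_{n_3}B_{n_4}P_{n_5}B_{n_6}, A_4 = B_{n_1}P_{n_2}P_{n_3}P_{n_4}B_{n_5}B_{n_6}, A_5 = B_{n_1}B_{n_2}P_{n_3}P_{n_4}B_{n_5}P_{n_6}, A_6 = B_{n_1}B_{n_2}P_{n_3}B_{n_4}P_{n_5}P_{n_6}, A_7 = B_{n_1}P_{n_2}B_{n_3}P_{n_4}P_{n_5}B_{n_6}, A_8 = B_{n_1}P_{n_2}B_{n_3}B_{n_4}P_{n_5}P_{n_6}, A_9 = P_{n_1}B_{n_2}B_{n_3}P_{n_4}B_{n_5}P_{n_6}, A_{10} = P_{n_1}B_{n_2}B_{n_3}P_{n_4}P_{n_5}B_{n_6}. Then the union ⋃_{i=1}^{10} A_i is a complete, b-saturated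 P-set in AG(n_1+⋯+n_6, 3). -/

import Mathlib

/-- A cap set in `AG(n,3)`: no three distinct points sum to zero. -/
def IsCap {n : ℕ} (C : Set (Fin n → ZMod 3)) : Prop :=
  ∀ a ∈ C, ∀ b ∈ C, ∀ c ∈ C, a ≠ b → a ≠ c → b ≠ c → a + b + c ≠ 0

/-- A complete cap set: a cap set that cannot be extended by any new point. -/
def IsCompleteCap {n : ℕ} (C : Set (Fin n → ZMod 3)) : Prop :=
  IsCap C ∧ ∀ x ∉ C, ¬ IsCap (insert x C)

/-- `x(0)`: the set of coordinates where `x` vanishes. -/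
def zeroSet {n : ℕ} (x : Fin n → ZMod 3) : Set (Fin n) := {i | x i = 0}

/-- `X(x)`: the set of points with the same zero set as `x`. -/
def Xset {n : ℕ} (x : Fin n → ZMod 3) : Set (Fin n → ZMod 3) :=
  {a | zeroSet a = zeroSet x}

/-- `B_n`: all points with no zero coordinates. -/
def Bset (n : ℕ) : Set (Fin n → ZMod 3) := {a | ∀ i, a i ≠ 0}

/-- A `P_n`-set. -/
def IsPSet {n : ℕ} (A : Set (Fin n → ZMod 3)) : Prop :=
  (∀ a ∈ A, ∀ b ∈ A, a ≠ b → ∃ i, a i = 0 ∧ b i = 0) ∧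
  (∀ a ∈ A, ∀ b ∈ A, ∀ c ∈ A, a ≠ b → a ≠ c → b ≠ c → a + b + c ≠ 0)

/-- A complete `P_n`-set: it cannot be extended by a new point to a `P_n`-set. -/
def IsCompletePSet {n : ℕ} (A : Set (Fin n → ZMod 3)) : Prop :=
  IsPSet A ∧ ∀ x ∉ A, ¬ IsPSet (insert x A)

/-- A `b`-saturated set: `X(α) ⊆ A` for every `α ∈ A`. -/
def IsBSaturated {n : ℕ} (A : Set (Fin n → ZMod 3)) : Prop :=
  ∀ a ∈ A, Xset a ⊆ A

/-- Concatenation (product) of sets of points. -/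
def concat {n m : ℕ} (A : Set (Fin n → ZMod 3)) (B : Set (Fin m → ZMod 3)) :
    Set (Fin (n + m) → ZMod 3) :=
  {x | ∃ a ∈ A, ∃ b ∈ B, x = Fin.append a b}

/-- Six-fold concatenation of point sets. -/
def concat6 {n1 n2 n3 n4 n5 n6 : ℕ}
    (A1 : Set (Fin n1 → ZMod 3)) (A2 : Set (Fin n2 → ZMod 3)) (A3 : Set (Fin n3 → ZMod 3))
    (A4 : Set (Fin n4 → ZMod 3)) (A5 : Set (Fin n5 → ZMod 3)) (A6 : Set (Fin n6 → ZMod 3)) :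
    Set (Fin (n1 + n2 + n3 + n4 + n5 + n6) → ZMod 3) :=
  concat (concat (concat (concat (concat A1 A2) A3) A4) A5) A6

set_option maxRecDepth 10000
set_option linter.unusedSectionVars false

namespace SixAux


def F6 : Finset (Finset (Fin 6)) :=
  { {0,1,2}, {0,1,5}, {0,2,4}, {1,2,3}, {2,3,5}, {2,4,5}, {1,3,4}, {1,4,5}, {0,3,5}, {0,3,4} }

lemma F6_pair : ∀ s ∈ F6, ∀ t ∈ F6, ∃ j, j ∈ s ∧ j ∈ t := by decide
lemma F6_cover : ∀ V : Finset (Fin 6), ∃ s ∈ F6, (s ⊆ V ∨ ∀ j ∈ s, j ∉ V) := by decide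
lemma F6_triple : ∀ s ∈ F6, ∀ t ∈ F6, ∀ u ∈ F6, ¬(s = t ∧ t = u) →
    ∃ j, (j ∈ s ∧ j ∈ t ∧ j ∉ u) ∨ (j ∈ s ∧ j ∉ t ∧ j ∈ u) ∨ (j ∉ s ∧ j ∈ t ∧ j ∈ u) := by decide

variable {n : Fin 6 → ℕ}

def Mset (P : ∀ j, Set (Fin (n j) → ZMod 3)) (s : Finset (Fin 6)) :
    Set (∀ j, Fin (n j) → ZMod 3) :=
  {y | ∀ j, if j ∈ s then y j ∈ P j else ∀ i, y j i ≠ 0}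

def Ubw (P : ∀ j, Set (Fin (n j) → ZMod 3)) : Set (∀ j, Fin (n j) → ZMod 3) :=
  ⋃ s ∈ F6, Mset P s

lemma mem_Ubw {P : ∀ j, Set (Fin (n j) → ZMod 3)} {z} :
    z ∈ Ubw P ↔ ∃ s ∈ F6, z ∈ Mset P s := by
  simp [Ubw]

lemma mem_Ubw10 {P : ∀ j, Set (Fin (n j) → ZMod 3)} {z} :
    z ∈ Ubw P ↔ z ∈ Mset P {0,1,2} ∨ z ∈ Mset P {0,1,5} ∨ z ∈ Mset P {0,2,4} ∨
      z ∈ Mset P {1,2,3} ∨ z ∈ Mset P {2,3,5} ∨ z ∈ Mset P {2,4,5} ∨ z ∈ Mset P {1,3,4} ∨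
      z ∈ Mset P {1,4,5} ∨ z ∈ Mset P {0,3,5} ∨ z ∈ Mset P {0,3,4} := by
  rw [mem_Ubw]
  constructor
  · rintro ⟨s, hs, hm⟩
    simp only [F6, Finset.mem_insert, Finset.mem_singleton] at hs
    rcases hs with rfl | rfl | rfl | rfl | rfl | rfl | rfl | rfl | rfl | rfl <;> tauto
  · intro h
    rcases h with h | h | h | h | h | h | h | h | h | h
    exacts [⟨_, by decide, h⟩, ⟨_, by decide, h⟩, ⟨_, by decide, h⟩, ⟨_, by decide, h⟩,
      ⟨_, by decide, h⟩, ⟨_, by decide, h⟩, ⟨_, by decide, h⟩, ⟨_, by decide, h⟩,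
      ⟨_, by decide, h⟩, ⟨_, by decide, h⟩]

-- every element of a complete b-saturated P-set has a zero coordinate
lemma Pzero {m : ℕ} (hm : 0 < m) {Q : Set (Fin m → ZMod 3)} (hP : IsPSet Q)
    (hS : IsBSaturated Q) {a} (ha : a ∈ Q) : ∃ i, a i = 0 := by
  by_contra h
  push_neg at h
  have hz : zeroSet a = (∅ : Set (Fin m)) := by
    ext i; simp [zeroSet, h i]
  have h1 : (fun _ => 1 : Fin m → ZMod 3) ∈ Q := by
    apply hS a ha
    show zeroSet _ = _
    rw [hz]; ext i; simp [zeroSet]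
  have h2 : (fun _ => 2 : Fin m → ZMod 3) ∈ Q := by
    apply hS a ha
    show zeroSet _ = _
    rw [hz]; ext i; simp [zeroSet, (by decide : (2:ZMod 3) ≠ 0)]
  have hne : (fun _ => 1 : Fin m → ZMod 3) ≠ (fun _ => 2) := by
    intro he
    have := congrFun he ⟨0, hm⟩
    exact absurd this (by decide)
  obtain ⟨i, hi, -⟩ := hP.1 _ h1 _ h2 hne
  simp at hi

lemma Pnonempty {m : ℕ} {Q : Set (Fin m → ZMod 3)} (hP : IsCompletePSet Q) : Q.Nonempty := by
  by_contra h
  rw [Set.not_nonempty_iff_eq_empty] at h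
  subst h
  apply hP.2 0 (by simp)
  constructor
  · intro a ha b hb hne
    simp at ha hb; subst ha; subst hb; exact absurd rfl hne
  · intro a ha b hb c hc hab hac hbc
    simp at ha hb; subst ha; subst hb; exact absurd rfl hab

lemma no_PPB {m : ℕ} {Q : Set (Fin m → ZMod 3)} (hP : IsPSet Q)
    (hz : ∀ a ∈ Q, ∃ i, a i = 0) {α β γ : Fin m → ZMod 3}
    (hα : α ∈ Q) (hβ : β ∈ Q) (hγ : ∀ i, γ i ≠ 0) (hs : α + β + γ = 0) : False := by
  by_cases hab : α = β
  · subst hab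
    have hga : γ = α := by
      funext i
      have := congrFun hs i
      simp only [Pi.add_apply, Pi.zero_apply] at this
      revert this
      have : ∀ u v : ZMod 3, u + u + v = 0 → v = u := by decide
      exact this _ _
    obtain ⟨i, hi⟩ := hz α hα
    exact hγ i (by rw [hga, hi])
  · obtain ⟨i, h1, h2⟩ := hP.1 α hα β hβ hab
    have := congrFun hs i
    simp only [Pi.add_apply, Pi.zero_apply, h1, h2, zero_add] at this
    exact hγ i this

section Main
variable {P : ∀ j, Set (Fin (n j) → ZMod 3)}
  (hn : ∀ j, 0 < n j) (hP : ∀ j, IsCompletePSet (P j)) (hS : ∀ j, IsBSaturated (P j))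

include hn hP hS in
lemma bw_i : ∀ x ∈ Ubw P, ∀ y ∈ Ubw P, ∃ j, ∃ i, x j i = 0 ∧ y j i = 0 := by
  intro x hx y hy
  obtain ⟨s, hsF, hxs⟩ := mem_Ubw.1 hx
  obtain ⟨t, htF, hyt⟩ := mem_Ubw.1 hy
  obtain ⟨j, hjs, hjt⟩ := F6_pair s hsF t htF
  have hxj : x j ∈ P j := by have := hxs j; rwa [if_pos hjs] at this
  have hyj : y j ∈ P j := by have := hyt j; rwa [if_pos hjt] at this
  by_cases h : x j = y j
  · obtain ⟨i, hi⟩ := Pzero (hn j) (hP j).1 (hS j) hxj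
    exact ⟨j, i, hi, h ▸ hi⟩
  · obtain ⟨i, h1, h2⟩ := (hP j).1.1 _ hxj _ hyj h
    exact ⟨j, i, h1, h2⟩

include hn hP hS in
lemma bw_ii : ∀ x ∈ Ubw P, ∀ y ∈ Ubw P, ∀ z ∈ Ubw P, x ≠ y → x + y + z ≠ 0 := by
  intro x hx y hy z hz hxy hsum
  obtain ⟨s, hsF, hxs⟩ := mem_Ubw.1 hx
  obtain ⟨t, htF, hyt⟩ := mem_Ubw.1 hy
  obtain ⟨u, huF, hzu⟩ := mem_Ubw.1 hz
  have hsumj : ∀ j, x j + y j + z j = 0 := fun j => congrFun hsum j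
  by_cases hstu : s = t ∧ t = u
  · obtain ⟨rfl, rfl⟩ := hstu
    apply hxy
    funext j
    have hj := hsumj j
    by_cases hjs : j ∈ s
    · have hxj : x j ∈ P j := by have := hxs j; rwa [if_pos hjs] at this
      have hyj : y j ∈ P j := by have := hyt j; rwa [if_pos hjs] at this
      have hzj : z j ∈ P j := by have := hzu j; rwa [if_pos hjs] at this
      by_contra hne
      have hdup : ∀ a b c : Fin (n j) → ZMod 3, a + a + b = 0 → b = a := by
        intro a b c h
        funext i
        have := congrFun h i
        simp only [Pi.add_apply, Pi.zero_apply] at this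
        revert this
        have : ∀ u v : ZMod 3, u + u + v = 0 → v = u := by decide
        exact this _ _
      by_cases hxz : x j = z j
      · -- y j = x j
        apply hne
        have : x j + z j + y j = 0 := by rw [← hj]; ring
        rw [hxz] at this ⊢
        exact (hdup _ _ 0 this).symm ▸ (hdup _ _ 0 this) ▸ rfl
      · by_cases hyz : y j = z j
        · apply hne
          have : y j + z j + x j = 0 := by rw [← hj]; ring
          rw [hyz] at this
          have := hdup _ _ 0 this
          rw [hyz, this]
        · exact (hP j).1.2 _ hxj _ hyj _ hzj hne hxz hyz hj
    · have hxj := hxs j; rw [if_neg hjs] at hxj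
      have hyj := hyt j; rw [if_neg hjs] at hyj
      have hzj := hzu j; rw [if_neg hjs] at hzj
      funext i
      have := congrFun hj i
      simp only [Pi.add_apply, Pi.zero_apply] at this
      have key : ∀ a b c : ZMod 3, a ≠ 0 → b ≠ 0 → c ≠ 0 → a + b + c = 0 → a = b := by decide
      exact key _ _ _ (hxj i) (hyj i) (hzj i) this
  · obtain ⟨j, hj⟩ := F6_triple s hsF t htF u huF hstu
    have hzeros : ∀ a ∈ P j, ∃ i, a i = 0 := fun a ha => Pzero (hn j) (hP j).1 (hS j) ha
    rcases hj with ⟨h1, h2, h3⟩ | ⟨h1, h2, h3⟩ | ⟨h1, h2, h3⟩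
    · have hxj : x j ∈ P j := by have := hxs j; rwa [if_pos h1] at this
      have hyj : y j ∈ P j := by have := hyt j; rwa [if_pos h2] at this
      have hzj := hzu j; rw [if_neg h3] at hzj
      exact no_PPB (hP j).1 hzeros hxj hyj hzj (hsumj j)
    · have hxj : x j ∈ P j := by have := hxs j; rwa [if_pos h1] at this
      have hzj : z j ∈ P j := by have := hzu j; rwa [if_pos h3] at this
      have hyj := hyt j; rw [if_neg h2] at hyj
      exact no_PPB (hP j).1 hzeros hxj hzj hyj (by rw [← hsumj j]; ring)
    · have hyj : y j ∈ P j := by have := hyt j; rwa [if_pos h2] at this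
      have hzj : z j ∈ P j := by have := hzu j; rwa [if_pos h3] at this
      have hxj := hxs j; rw [if_neg h1] at hxj
      exact no_PPB (hP j).1 hzeros hyj hzj hxj (by rw [← hsumj j]; ring)

include hS in
lemma bw_sat : ∀ x ∈ Ubw P, ∀ y : ∀ j, Fin (n j) → ZMod 3,
    (∀ j i, y j i = 0 ↔ x j i = 0) → y ∈ Ubw P := by
  intro x hx y h
  obtain ⟨s, hsF, hxs⟩ := mem_Ubw.1 hx
  refine mem_Ubw.2 ⟨s, hsF, fun j => ?_⟩
  by_cases hjs : j ∈ s
  · rw [if_pos hjs]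
    have hxj : x j ∈ P j := by have := hxs j; rwa [if_pos hjs] at this
    apply hS j (x j) hxj
    show zeroSet _ = zeroSet _
    ext i
    simpa [zeroSet] using h j i
  · rw [if_neg hjs]
    have hxj := hxs j; rw [if_neg hjs] at hxj
    intro i hy0
    exact hxj i ((h j i).1 hy0)

include hn hP hS in
lemma bw_complete {y : ∀ j, Fin (n j) → ZMod 3} (hy : y ∉ Ubw P) :
    (∃ x ∈ Ubw P, ∀ j i, ¬(x j i = 0 ∧ y j i = 0)) ∨
    (∃ x ∈ Ubw P, ∃ x' ∈ Ubw P, x ≠ x' ∧ y + x + x' = 0) := by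
  classical
  set V : Finset (Fin 6) := Finset.univ.filter
      (fun j => y j ∈ P j ∨ ∃ β ∈ P j, ∃ γ ∈ P j, β ≠ γ ∧ y j + β + γ = 0) with hV
  obtain ⟨s, hsF, hcase⟩ := F6_cover V
  rcases hcase with hsub | hdis
  · -- s ⊆ V : build a sum-zero pair
    have hch : ∀ j : Fin 6, ∃ ab : (Fin (n j) → ZMod 3) × (Fin (n j) → ZMod 3),
        (if j ∈ s then ab.1 ∈ P j ∧ ab.2 ∈ P j else (∀ i, ab.1 i ≠ 0) ∧ (∀ i, ab.2 i ≠ 0)) ∧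
        y j + ab.1 + ab.2 = 0 ∧
        (ab.1 = ab.2 → (if j ∈ s then y j ∈ P j else ∀ i, y j i ≠ 0)) := by
      intro j
      by_cases hjs : j ∈ s
      · have hjV := hsub hjs
        rw [hV, Finset.mem_filter] at hjV
        rcases hjV.2 with hyP | ⟨β, hβ, γ, hγ, hbg, hsum⟩
        · refine ⟨(y j, y j), ?_, ?_, fun _ => ?_⟩
          · rw [if_pos hjs]; exact ⟨hyP, hyP⟩
          · funext i; simp only [Pi.add_apply, Pi.zero_apply]
            exact (by decide : ∀ u : ZMod 3, u + u + u = 0) _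
          · rw [if_pos hjs]; exact hyP
        · refine ⟨(β, γ), ?_, hsum, fun h => absurd h hbg⟩
          rw [if_pos hjs]; exact ⟨hβ, hγ⟩
      · by_cases hz : ∃ i, y j i = 0
        · obtain ⟨i0, hi0⟩ := hz
          refine ⟨(fun i => y j i + 1 - (y j i)^2,
                   fun i => -(y j i) - (y j i + 1 - (y j i)^2)), ?_, ?_, ?_⟩
          · rw [if_neg hjs]
            refine ⟨fun i => ?_, fun i => ?_⟩
            · exact (by decide : ∀ u : ZMod 3, u + 1 - u^2 ≠ 0) _
            · exact (by decide : ∀ u : ZMod 3, -u - (u + 1 - u^2) ≠ 0) _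
          · funext i; simp only [Pi.add_apply, Pi.zero_apply]; ring
          · intro h
            have h0 : y j i0 + 1 - (y j i0)^2 = -(y j i0) - (y j i0 + 1 - (y j i0)^2) :=
              congrFun h i0
            rw [hi0] at h0
            exact absurd h0 (by decide)
        · push_neg at hz
          refine ⟨(y j, y j), ?_, ?_, fun _ => ?_⟩
          · rw [if_neg hjs]; exact ⟨hz, hz⟩
          · funext i; simp only [Pi.add_apply, Pi.zero_apply]
            exact (by decide : ∀ u : ZMod 3, u + u + u = 0) _
          · rw [if_neg hjs]; exact hz
    choose f hf1 hf2 hf3 using hch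
    have hxU : (fun j => (f j).1) ∈ Ubw P := by
      refine mem_Ubw.2 ⟨s, hsF, fun j => ?_⟩
      by_cases hjs : j ∈ s
      · rw [if_pos hjs]; have := hf1 j; rw [if_pos hjs] at this; exact this.1
      · rw [if_neg hjs]; have := hf1 j; rw [if_neg hjs] at this; exact this.1
    have hx'U : (fun j => (f j).2) ∈ Ubw P := by
      refine mem_Ubw.2 ⟨s, hsF, fun j => ?_⟩
      by_cases hjs : j ∈ s
      · rw [if_pos hjs]; have := hf1 j; rw [if_pos hjs] at this; exact this.2
      · rw [if_neg hjs]; have := hf1 j; rw [if_neg hjs] at this; exact this.2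
    have hne : (fun j => (f j).1) ≠ (fun j => (f j).2) := by
      intro h
      exact hy (mem_Ubw.2 ⟨s, hsF, fun j => hf3 j (congrFun h j)⟩)
    exact Or.inr ⟨_, hxU, _, hx'U, hne, funext fun j => hf2 j⟩
  · -- s disjoint from V : build a point sharing no zero with y
    have hch : ∀ j : Fin 6, ∃ a : Fin (n j) → ZMod 3,
        (if j ∈ s then a ∈ P j else ∀ i, a i ≠ 0) ∧ ∀ i, ¬(a i = 0 ∧ y j i = 0) := by
      intro j
      by_cases hjs : j ∈ s
      · have hpred : ¬(y j ∈ P j ∨ ∃ β ∈ P j, ∃ γ ∈ P j, β ≠ γ ∧ y j + β + γ = 0) := by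
          intro hp
          exact (hdis j hjs) (by rw [hV]; exact Finset.mem_filter.2 ⟨Finset.mem_univ j, hp⟩)
        have hyP : y j ∉ P j := fun h => hpred (Or.inl h)
        have h2b : ¬∃ β ∈ P j, ∃ γ ∈ P j, β ≠ γ ∧ y j + β + γ = 0 := fun h => hpred (Or.inr h)
        by_cases hz : ∃ i, y j i = 0
        · have key : ∃ β ∈ P j, ∀ i, ¬(β i = 0 ∧ y j i = 0) := by
            by_contra hcon
            push_neg at hcon
            apply (hP j).2 (y j) hyP
            constructor
            · intro a ha b hb hab
              rcases Set.mem_insert_iff.1 ha with rfl | haP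
              · rcases Set.mem_insert_iff.1 hb with rfl | hbP
                · exact absurd rfl hab
                · obtain ⟨i, h1, h2⟩ := hcon b hbP
                  exact ⟨i, h2, h1⟩
              · rcases Set.mem_insert_iff.1 hb with rfl | hbP
                · obtain ⟨i, h1, h2⟩ := hcon a haP
                  exact ⟨i, h1, h2⟩
                · exact (hP j).1.1 a haP b hbP hab
            · intro a ha b hb c hc hab hac hbc hsum0
              rcases Set.mem_insert_iff.1 ha with rfl | haP <;>
                rcases Set.mem_insert_iff.1 hb with rfl | hbP <;>
                rcases Set.mem_insert_iff.1 hc with rfl | hcP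
              · exact absurd rfl hab
              · exact absurd rfl hab
              · exact absurd rfl hac
              · exact h2b ⟨b, hbP, c, hcP, hbc, hsum0⟩
              · exact absurd rfl hbc
              · exact h2b ⟨a, haP, c, hcP, hac, by rw [← hsum0]; ring⟩
              · exact h2b ⟨a, haP, b, hbP, hab, by rw [← hsum0]; ring⟩
              · exact absurd hsum0 ((hP j).1.2 a haP b hbP c hcP hab hac hbc)
          obtain ⟨β, hβ, hβz⟩ := key
          exact ⟨β, by rw [if_pos hjs]; exact hβ, hβz⟩
        · push_neg at hz
          obtain ⟨a, ha⟩ := Pnonempty (hP j)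
          exact ⟨a, by rw [if_pos hjs]; exact ha, fun i hi => hz i hi.2⟩
      · refine ⟨fun _ => 1, ?_, fun i hi => ?_⟩
        · rw [if_neg hjs]; intro i h1; exact one_ne_zero h1
        · exact one_ne_zero hi.1
    choose f hf1 hf2 using hch
    exact Or.inl ⟨f, mem_Ubw.2 ⟨s, hsF, fun j => hf1 j⟩, fun j i => hf2 j i⟩

end Main
section Transfer
variable {n1 n2 n3 n4 n5 n6 : ℕ}
open Fin

def e1 (i : Fin n1) : Fin (n1+n2+n3+n4+n5+n6) := castAdd n6 (castAdd n5 (castAdd n4 (castAdd n3 (castAdd n2 i))))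
def e2 (i : Fin n2) : Fin (n1+n2+n3+n4+n5+n6) := castAdd n6 (castAdd n5 (castAdd n4 (castAdd n3 (natAdd n1 i))))
def e3 (i : Fin n3) : Fin (n1+n2+n3+n4+n5+n6) := castAdd n6 (castAdd n5 (castAdd n4 (natAdd (n1+n2) i)))
def e4 (i : Fin n4) : Fin (n1+n2+n3+n4+n5+n6) := castAdd n6 (castAdd n5 (natAdd (n1+n2+n3) i))
def e5 (i : Fin n5) : Fin (n1+n2+n3+n4+n5+n6) := castAdd n6 (natAdd (n1+n2+n3+n4) i)
def e6 (i : Fin n6) : Fin (n1+n2+n3+n4+n5+n6) := natAdd (n1+n2+n3+n4+n5) i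

lemma mem_concat {p q : ℕ} {A : Set (Fin p → ZMod 3)} {B : Set (Fin q → ZMod 3)} {x : Fin (p+q) → ZMod 3} :
    x ∈ concat A B ↔ (fun i => x (Fin.castAdd q i)) ∈ A ∧ (fun i => x (Fin.natAdd p i)) ∈ B := by
  constructor
  · rintro ⟨a, ha, b, hb, rfl⟩
    constructor
    · simpa only [Fin.append_left] using ha
    · simpa only [Fin.append_right] using hb
  · rintro ⟨ha, hb⟩
    refine ⟨_, ha, _, hb, ?_⟩
    funext i
    induction i using Fin.addCases with
    | left j => exact (Fin.append_left (fun i => x (Fin.castAdd q i)) (fun i => x (Fin.natAdd p i)) j).symm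
    | right j => exact (Fin.append_right (fun i => x (Fin.castAdd q i)) (fun i => x (Fin.natAdd p i)) j).symm

lemma mem_concat6 {A1 : Set (Fin n1 → ZMod 3)} {A2 : Set (Fin n2 → ZMod 3)} {A3 : Set (Fin n3 → ZMod 3)}
    {A4 : Set (Fin n4 → ZMod 3)} {A5 : Set (Fin n5 → ZMod 3)} {A6 : Set (Fin n6 → ZMod 3)}
    {x : Fin (n1+n2+n3+n4+n5+n6) → ZMod 3} :
    x ∈ concat6 A1 A2 A3 A4 A5 A6 ↔
      (fun i => x (e1 i)) ∈ A1 ∧ (fun i => x (e2 i)) ∈ A2 ∧ (fun i => x (e3 i)) ∈ A3 ∧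
      (fun i => x (e4 i)) ∈ A4 ∧ (fun i => x (e5 i)) ∈ A5 ∧ (fun i => x (e6 i)) ∈ A6 := by
  simp [concat6, mem_concat, e1, e2, e3, e4, e5, e6, and_assoc]

def bld (a1 : Fin n1 → ZMod 3) (a2 : Fin n2 → ZMod 3) (a3 : Fin n3 → ZMod 3)
    (a4 : Fin n4 → ZMod 3) (a5 : Fin n5 → ZMod 3) (a6 : Fin n6 → ZMod 3) :
    Fin (n1+n2+n3+n4+n5+n6) → ZMod 3 :=
  Fin.append (Fin.append (Fin.append (Fin.append (Fin.append a1 a2) a3) a4) a5) a6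

variable (a1 : Fin n1 → ZMod 3) (a2 : Fin n2 → ZMod 3) (a3 : Fin n3 → ZMod 3)
    (a4 : Fin n4 → ZMod 3) (a5 : Fin n5 → ZMod 3) (a6 : Fin n6 → ZMod 3)

lemma bld_e1 (i : Fin n1) : bld a1 a2 a3 a4 a5 a6 (e1 i) = a1 i := by
  simp [bld, e1, Fin.append_left]
lemma bld_e2 (i : Fin n2) : bld a1 a2 a3 a4 a5 a6 (e2 i) = a2 i := by
  simp [bld, e2, Fin.append_left, Fin.append_right]
lemma bld_e3 (i : Fin n3) : bld a1 a2 a3 a4 a5 a6 (e3 i) = a3 i := by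
  simp [bld, e3, Fin.append_left, Fin.append_right]
lemma bld_e4 (i : Fin n4) : bld a1 a2 a3 a4 a5 a6 (e4 i) = a4 i := by
  simp [bld, e4, Fin.append_left, Fin.append_right]
lemma bld_e5 (i : Fin n5) : bld a1 a2 a3 a4 a5 a6 (e5 i) = a5 i := by
  simp [bld, e5, Fin.append_left, Fin.append_right]
lemma bld_e6 (i : Fin n6) : bld a1 a2 a3 a4 a5 a6 (e6 i) = a6 i := by
  simp [bld, e6, Fin.append_right]

lemma classify (i : Fin (n1+n2+n3+n4+n5+n6)) :
    (∃ j, i = e1 j) ∨ (∃ j, i = e2 j) ∨ (∃ j, i = e3 j) ∨ (∃ j, i = e4 j) ∨ (∃ j, i = e5 j) ∨ (∃ j, i = e6 j) := by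
  induction i using Fin.addCases with
  | right j => exact Or.inr (Or.inr (Or.inr (Or.inr (Or.inr ⟨j, rfl⟩))))
  | left i =>
    induction i using Fin.addCases with
    | right j => exact Or.inr (Or.inr (Or.inr (Or.inr (Or.inl ⟨j, rfl⟩))))
    | left i =>
      induction i using Fin.addCases with
      | right j => exact Or.inr (Or.inr (Or.inr (Or.inl ⟨j, rfl⟩)))
      | left i =>
        induction i using Fin.addCases with
        | right j => exact Or.inr (Or.inr (Or.inl ⟨j, rfl⟩))
        | left i =>
          induction i using Fin.addCases with
          | right j => exact Or.inr (Or.inl ⟨j, rfl⟩)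
          | left j => exact Or.inl ⟨j, rfl⟩

def nnF (n1 n2 n3 n4 n5 n6 : ℕ) : Fin 6 → ℕ := fun j => match j with
  | ⟨0, _⟩ => n1 | ⟨1, _⟩ => n2 | ⟨2, _⟩ => n3 | ⟨3, _⟩ => n4 | ⟨4, _⟩ => n5 | ⟨5, _⟩ => n6

variable {n1 n2 n3 n4 n5 n6 : ℕ} in
lemma nnF0 : nnF n1 n2 n3 n4 n5 n6 0 = n1 := rfl
variable {n1 n2 n3 n4 n5 n6 : ℕ} in
lemma nnF1 : nnF n1 n2 n3 n4 n5 n6 1 = n2 := rfl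
variable {n1 n2 n3 n4 n5 n6 : ℕ} in
lemma nnF2 : nnF n1 n2 n3 n4 n5 n6 2 = n3 := rfl
variable {n1 n2 n3 n4 n5 n6 : ℕ} in
lemma nnF3 : nnF n1 n2 n3 n4 n5 n6 3 = n4 := rfl
variable {n1 n2 n3 n4 n5 n6 : ℕ} in
lemma nnF4 : nnF n1 n2 n3 n4 n5 n6 4 = n5 := rfl
variable {n1 n2 n3 n4 n5 n6 : ℕ} in
lemma nnF5 : nnF n1 n2 n3 n4 n5 n6 5 = n6 := rfl

def PF (P1 : Set (Fin n1 → ZMod 3)) (P2 : Set (Fin n2 → ZMod 3)) (P3 : Set (Fin n3 → ZMod 3))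
    (P4 : Set (Fin n4 → ZMod 3)) (P5 : Set (Fin n5 → ZMod 3)) (P6 : Set (Fin n6 → ZMod 3)) :
    ∀ j : Fin 6, Set (Fin (nnF n1 n2 n3 n4 n5 n6 j) → ZMod 3) := fun j => match j with
  | ⟨0, _⟩ => P1 | ⟨1, _⟩ => P2 | ⟨2, _⟩ => P3 | ⟨3, _⟩ => P4 | ⟨4, _⟩ => P5 | ⟨5, _⟩ => P6

def toB (x : Fin (n1+n2+n3+n4+n5+n6) → ZMod 3) :
    ∀ j : Fin 6, Fin (nnF n1 n2 n3 n4 n5 n6 j) → ZMod 3 := fun j => match j with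
  | ⟨0, _⟩ => fun i => x (e1 i)
  | ⟨1, _⟩ => fun i => x (e2 i)
  | ⟨2, _⟩ => fun i => x (e3 i)
  | ⟨3, _⟩ => fun i => x (e4 i)
  | ⟨4, _⟩ => fun i => x (e5 i)
  | ⟨5, _⟩ => fun i => x (e6 i)

variable {x : Fin (n1+n2+n3+n4+n5+n6) → ZMod 3}

lemma toB_zero : toB x 0 = fun i => x (e1 i) := rfl
lemma toB_one : toB x 1 = fun i => x (e2 i) := rfl
lemma toB_two : toB x 2 = fun i => x (e3 i) := rfl
lemma toB_three : toB x 3 = fun i => x (e4 i) := rfl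
lemma toB_four : toB x 4 = fun i => x (e5 i) := rfl
lemma toB_five : toB x 5 = fun i => x (e6 i) := rfl

lemma bld_toB : bld (fun i => x (e1 i)) (fun i => x (e2 i)) (fun i => x (e3 i))
    (fun i => x (e4 i)) (fun i => x (e5 i)) (fun i => x (e6 i)) = x := by
  funext i
  rcases classify i with ⟨j, rfl⟩ | ⟨j, rfl⟩ | ⟨j, rfl⟩ | ⟨j, rfl⟩ | ⟨j, rfl⟩ | ⟨j, rfl⟩
  · exact bld_e1 _ _ _ _ _ _ j
  · exact bld_e2 _ _ _ _ _ _ j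
  · exact bld_e3 _ _ _ _ _ _ j
  · exact bld_e4 _ _ _ _ _ _ j
  · exact bld_e5 _ _ _ _ _ _ j
  · exact bld_e6 _ _ _ _ _ _ j

lemma toB_inj {x y : Fin (n1+n2+n3+n4+n5+n6) → ZMod 3} (h : toB x = toB y) : x = y := by
  rw [← bld_toB (x := x), ← bld_toB (x := y)]
  have h1 : (fun i => x (e1 i)) = (fun i => y (e1 i)) := congrFun h 0
  have h2 : (fun i => x (e2 i)) = (fun i => y (e2 i)) := congrFun h 1
  have h3 : (fun i => x (e3 i)) = (fun i => y (e3 i)) := congrFun h 2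
  have h4 : (fun i => x (e4 i)) = (fun i => y (e4 i)) := congrFun h 3
  have h5 : (fun i => x (e5 i)) = (fun i => y (e5 i)) := congrFun h 4
  have h6 : (fun i => x (e6 i)) = (fun i => y (e6 i)) := congrFun h 5
  rw [h1, h2, h3, h4, h5, h6]

lemma toB_bld (w : ∀ j : Fin 6, Fin (nnF n1 n2 n3 n4 n5 n6 j) → ZMod 3) :
    toB (bld (w 0) (w 1) (w 2) (w 3) (w 4) (w 5)) = w := by
  funext j
  fin_cases j
  · funext i; exact bld_e1 _ _ _ _ _ _ i
  · funext i; exact bld_e2 _ _ _ _ _ _ i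
  · funext i; exact bld_e3 _ _ _ _ _ _ i
  · funext i; exact bld_e4 _ _ _ _ _ _ i
  · funext i; exact bld_e5 _ _ _ _ _ _ i
  · funext i; exact bld_e6 _ _ _ _ _ _ i

lemma forall_fin6 {p : Fin 6 → Prop} : (∀ j, p j) ↔ p 0 ∧ p 1 ∧ p 2 ∧ p 3 ∧ p 4 ∧ p 5 :=
  ⟨fun h => ⟨h 0, h 1, h 2, h 3, h 4, h 5⟩,
   fun ⟨a, b, c, d, e, f⟩ j => by fin_cases j <;> assumption⟩

end Transfer

end SixAux


namespace SixAux
section Pat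
variable {n1 n2 n3 n4 n5 n6 : ℕ}
  (P1 : Set (Fin n1 → ZMod 3)) (P2 : Set (Fin n2 → ZMod 3)) (P3 : Set (Fin n3 → ZMod 3))
  (P4 : Set (Fin n4 → ZMod 3)) (P5 : Set (Fin n5 → ZMod 3)) (P6 : Set (Fin n6 → ZMod 3))
  {x : Fin (n1+n2+n3+n4+n5+n6) → ZMod 3}

lemma pat1 : x ∈ concat6 P1 P2 P3 (Bset n4) (Bset n5) (Bset n6) ↔
    toB x ∈ Mset (PF P1 P2 P3 P4 P5 P6) {0,1,2} := by
  rw [mem_concat6]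
  simp only [Mset, Set.mem_setOf_eq, forall_fin6, Finset.mem_insert, Finset.mem_singleton,
    toB_zero, toB_one, toB_two, toB_three, toB_four, toB_five, Bset]
  simp (config := { decide := true }) [PF, nnF0, nnF1, nnF2, nnF3, nnF4, nnF5]
  intros; exact Iff.rfl

lemma pat2 : x ∈ concat6 P1 P2 (Bset n3) (Bset n4) (Bset n5) P6 ↔
    toB x ∈ Mset (PF P1 P2 P3 P4 P5 P6) {0,1,5} := by
  rw [mem_concat6]
  simp only [Mset, Set.mem_setOf_eq, forall_fin6, Finset.mem_insert, Finset.mem_singleton,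
    toB_zero, toB_one, toB_two, toB_three, toB_four, toB_five, Bset]
  simp (config := { decide := true }) [PF, nnF0, nnF1, nnF2, nnF3, nnF4, nnF5]
  intros; exact Iff.rfl

lemma pat3 : x ∈ concat6 P1 (Bset n2) P3 (Bset n4) P5 (Bset n6) ↔
    toB x ∈ Mset (PF P1 P2 P3 P4 P5 P6) {0,2,4} := by
  rw [mem_concat6]
  simp only [Mset, Set.mem_setOf_eq, forall_fin6, Finset.mem_insert, Finset.mem_singleton,
    toB_zero, toB_one, toB_two, toB_three, toB_four, toB_five, Bset]
  simp (config := { decide := true }) [PF, nnF0, nnF1, nnF2, nnF3, nnF4, nnF5]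
  intros; exact Iff.rfl

lemma pat4 : x ∈ concat6 (Bset n1) P2 P3 P4 (Bset n5) (Bset n6) ↔
    toB x ∈ Mset (PF P1 P2 P3 P4 P5 P6) {1,2,3} := by
  rw [mem_concat6]
  simp only [Mset, Set.mem_setOf_eq, forall_fin6, Finset.mem_insert, Finset.mem_singleton,
    toB_zero, toB_one, toB_two, toB_three, toB_four, toB_five, Bset]
  simp (config := { decide := true }) [PF, nnF0, nnF1, nnF2, nnF3, nnF4, nnF5]
  intros; exact Iff.rfl

lemma pat5 : x ∈ concat6 (Bset n1) (Bset n2) P3 P4 (Bset n5) P6 ↔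
    toB x ∈ Mset (PF P1 P2 P3 P4 P5 P6) {2,3,5} := by
  rw [mem_concat6]
  simp only [Mset, Set.mem_setOf_eq, forall_fin6, Finset.mem_insert, Finset.mem_singleton,
    toB_zero, toB_one, toB_two, toB_three, toB_four, toB_five, Bset]
  simp (config := { decide := true }) [PF, nnF0, nnF1, nnF2, nnF3, nnF4, nnF5]
  intros; exact Iff.rfl

lemma pat6 : x ∈ concat6 (Bset n1) (Bset n2) P3 (Bset n4) P5 P6 ↔
    toB x ∈ Mset (PF P1 P2 P3 P4 P5 P6) {2,4,5} := by
  rw [mem_concat6]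
  simp only [Mset, Set.mem_setOf_eq, forall_fin6, Finset.mem_insert, Finset.mem_singleton,
    toB_zero, toB_one, toB_two, toB_three, toB_four, toB_five, Bset]
  simp (config := { decide := true }) [PF, nnF0, nnF1, nnF2, nnF3, nnF4, nnF5]
  intros; exact Iff.rfl

lemma pat7 : x ∈ concat6 (Bset n1) P2 (Bset n3) P4 P5 (Bset n6) ↔
    toB x ∈ Mset (PF P1 P2 P3 P4 P5 P6) {1,3,4} := by
  rw [mem_concat6]
  simp only [Mset, Set.mem_setOf_eq, forall_fin6, Finset.mem_insert, Finset.mem_singleton,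
    toB_zero, toB_one, toB_two, toB_three, toB_four, toB_five, Bset]
  simp (config := { decide := true }) [PF, nnF0, nnF1, nnF2, nnF3, nnF4, nnF5]
  intros; exact Iff.rfl

lemma pat8 : x ∈ concat6 (Bset n1) P2 (Bset n3) (Bset n4) P5 P6 ↔
    toB x ∈ Mset (PF P1 P2 P3 P4 P5 P6) {1,4,5} := by
  rw [mem_concat6]
  simp only [Mset, Set.mem_setOf_eq, forall_fin6, Finset.mem_insert, Finset.mem_singleton,
    toB_zero, toB_one, toB_two, toB_three, toB_four, toB_five, Bset]
  simp (config := { decide := true }) [PF, nnF0, nnF1, nnF2, nnF3, nnF4, nnF5]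
  intros; exact Iff.rfl

lemma pat9 : x ∈ concat6 P1 (Bset n2) (Bset n3) P4 (Bset n5) P6 ↔
    toB x ∈ Mset (PF P1 P2 P3 P4 P5 P6) {0,3,5} := by
  rw [mem_concat6]
  simp only [Mset, Set.mem_setOf_eq, forall_fin6, Finset.mem_insert, Finset.mem_singleton,
    toB_zero, toB_one, toB_two, toB_three, toB_four, toB_five, Bset]
  simp (config := { decide := true }) [PF, nnF0, nnF1, nnF2, nnF3, nnF4, nnF5]
  intros; exact Iff.rfl

lemma pat10 : x ∈ concat6 P1 (Bset n2) (Bset n3) P4 P5 (Bset n6) ↔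
    toB x ∈ Mset (PF P1 P2 P3 P4 P5 P6) {0,3,4} := by
  rw [mem_concat6]
  simp only [Mset, Set.mem_setOf_eq, forall_fin6, Finset.mem_insert, Finset.mem_singleton,
    toB_zero, toB_one, toB_two, toB_three, toB_four, toB_five, Bset]
  simp (config := { decide := true }) [PF, nnF0, nnF1, nnF2, nnF3, nnF4, nnF5]
  intros; exact Iff.rfl

lemma union_iff (x : Fin (n1+n2+n3+n4+n5+n6) → ZMod 3) :
    x ∈ (concat6 P1 P2 P3 (Bset n4) (Bset n5) (Bset n6) ∪
       concat6 P1 P2 (Bset n3) (Bset n4) (Bset n5) P6 ∪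
       concat6 P1 (Bset n2) P3 (Bset n4) P5 (Bset n6) ∪
       concat6 (Bset n1) P2 P3 P4 (Bset n5) (Bset n6) ∪
       concat6 (Bset n1) (Bset n2) P3 P4 (Bset n5) P6 ∪
       concat6 (Bset n1) (Bset n2) P3 (Bset n4) P5 P6 ∪
       concat6 (Bset n1) P2 (Bset n3) P4 P5 (Bset n6) ∪
       concat6 (Bset n1) P2 (Bset n3) (Bset n4) P5 P6 ∪
       concat6 P1 (Bset n2) (Bset n3) P4 (Bset n5) P6 ∪
       concat6 P1 (Bset n2) (Bset n3) P4 P5 (Bset n6)) ↔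
    toB x ∈ Ubw (PF P1 P2 P3 P4 P5 P6) := by
  rw [mem_Ubw10]
  simp only [Set.mem_union,
    pat1 P1 P2 P3 P4 P5 P6, pat2 P1 P2 P3 P4 P5 P6, pat3 P1 P2 P3 P4 P5 P6,
    pat4 P1 P2 P3 P4 P5 P6, pat5 P1 P2 P3 P4 P5 P6, pat6 P1 P2 P3 P4 P5 P6,
    pat7 P1 P2 P3 P4 P5 P6, pat8 P1 P2 P3 P4 P5 P6, pat9 P1 P2 P3 P4 P5 P6,
    pat10 P1 P2 P3 P4 P5 P6]
  tauto

end Pat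
end SixAux

/-- «Six» construction (Theorem F): the union of the ten combinations is a
complete, `b`-saturated `P`-set. -/
theorem six_construction (n1 n2 n3 n4 n5 n6 : ℕ)
    (h1 : 0 < n1) (h2 : 0 < n2) (h3 : 0 < n3) (h4 : 0 < n4) (h5 : 0 < n5) (h6 : 0 < n6)
    (P1 : Set (Fin n1 → ZMod 3)) (P2 : Set (Fin n2 → ZMod 3)) (P3 : Set (Fin n3 → ZMod 3))
    (P4 : Set (Fin n4 → ZMod 3)) (P5 : Set (Fin n5 → ZMod 3)) (P6 : Set (Fin n6 → ZMod 3))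
    (hP1 : IsCompletePSet P1) (hP1b : IsBSaturated P1)
    (hP2 : IsCompletePSet P2) (hP2b : IsBSaturated P2)
    (hP3 : IsCompletePSet P3) (hP3b : IsBSaturated P3)
    (hP4 : IsCompletePSet P4) (hP4b : IsBSaturated P4)
    (hP5 : IsCompletePSet P5) (hP5b : IsBSaturated P5)
    (hP6 : IsCompletePSet P6) (hP6b : IsBSaturated P6) :
    IsCompletePSet
      (concat6 P1 P2 P3 (Bset n4) (Bset n5) (Bset n6) ∪
       concat6 P1 P2 (Bset n3) (Bset n4) (Bset n5) P6 ∪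
       concat6 P1 (Bset n2) P3 (Bset n4) P5 (Bset n6) ∪
       concat6 (Bset n1) P2 P3 P4 (Bset n5) (Bset n6) ∪
       concat6 (Bset n1) (Bset n2) P3 P4 (Bset n5) P6 ∪
       concat6 (Bset n1) (Bset n2) P3 (Bset n4) P5 P6 ∪
       concat6 (Bset n1) P2 (Bset n3) P4 P5 (Bset n6) ∪
       concat6 (Bset n1) P2 (Bset n3) (Bset n4) P5 P6 ∪
       concat6 P1 (Bset n2) (Bset n3) P4 (Bset n5) P6 ∪
       concat6 P1 (Bset n2) (Bset n3) P4 P5 (Bset n6)) ∧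
    IsBSaturated
      (concat6 P1 P2 P3 (Bset n4) (Bset n5) (Bset n6) ∪
       concat6 P1 P2 (Bset n3) (Bset n4) (Bset n5) P6 ∪
       concat6 P1 (Bset n2) P3 (Bset n4) P5 (Bset n6) ∪
       concat6 (Bset n1) P2 P3 P4 (Bset n5) (Bset n6) ∪
       concat6 (Bset n1) (Bset n2) P3 P4 (Bset n5) P6 ∪
       concat6 (Bset n1) (Bset n2) P3 (Bset n4) P5 P6 ∪
       concat6 (Bset n1) P2 (Bset n3) P4 P5 (Bset n6) ∪
       concat6 (Bset n1) P2 (Bset n3) (Bset n4) P5 P6 ∪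
       concat6 P1 (Bset n2) (Bset n3) P4 (Bset n5) P6 ∪
       concat6 P1 (Bset n2) (Bset n3) P4 P5 (Bset n6)) := by
  classical
  have hn' : ∀ j, 0 < SixAux.nnF n1 n2 n3 n4 n5 n6 j := by
    intro j; fin_cases j <;> assumption
  have hP' : ∀ j, IsCompletePSet (SixAux.PF P1 P2 P3 P4 P5 P6 j) := by
    intro j; fin_cases j <;> assumption
  have hS' : ∀ j, IsBSaturated (SixAux.PF P1 P2 P3 P4 P5 P6 j) := by
    intro j; fin_cases j <;> assumption
  have hU := SixAux.union_iff P1 P2 P3 P4 P5 P6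
  refine ⟨⟨⟨?_, ?_⟩, ?_⟩, ?_⟩
  · -- property (i)
    intro a ha b hb hne
    obtain ⟨j, i, hz1, hz2⟩ := SixAux.bw_i hn' hP' hS' _ ((hU a).1 ha) _ ((hU b).1 hb)
    fin_cases j
    · exact ⟨SixAux.e1 i, hz1, hz2⟩
    · exact ⟨SixAux.e2 i, hz1, hz2⟩
    · exact ⟨SixAux.e3 i, hz1, hz2⟩
    · exact ⟨SixAux.e4 i, hz1, hz2⟩
    · exact ⟨SixAux.e5 i, hz1, hz2⟩
    · exact ⟨SixAux.e6 i, hz1, hz2⟩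
  · -- property (ii)
    intro a ha b hb c hc hab hac hbc hsum
    have hsumB : SixAux.toB a + SixAux.toB b + SixAux.toB c = 0 := by
      funext j
      fin_cases j <;> funext i
      · exact congrFun hsum (SixAux.e1 i)
      · exact congrFun hsum (SixAux.e2 i)
      · exact congrFun hsum (SixAux.e3 i)
      · exact congrFun hsum (SixAux.e4 i)
      · exact congrFun hsum (SixAux.e5 i)
      · exact congrFun hsum (SixAux.e6 i)
    exact SixAux.bw_ii hn' hP' hS' _ ((hU a).1 ha) _ ((hU b).1 hb) _ ((hU c).1 hc)
      (fun h => hab (SixAux.toB_inj h)) hsumB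
  · -- completeness
    intro z hz hPS
    have hzB : SixAux.toB z ∉ SixAux.Ubw (SixAux.PF P1 P2 P3 P4 P5 P6) :=
      fun h => hz ((hU z).2 h)
    rcases SixAux.bw_complete hn' hP' hS' hzB with
      ⟨w, hwU, hnoz⟩ | ⟨w, hwU, w', hw'U, hww', hsumB⟩
    · have hxrA := (hU (SixAux.bld (w 0) (w 1) (w 2) (w 3) (w 4) (w 5))).2
        (by erw [SixAux.toB_bld w]; exact hwU)
      have hne : SixAux.bld (w 0) (w 1) (w 2) (w 3) (w 4) (w 5) ≠ z :=
        fun h => hz (h ▸ hxrA)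
      obtain ⟨i, h1, h2⟩ := hPS.1 _ (Set.mem_insert_of_mem _ hxrA) z (Set.mem_insert _ _) hne
      rcases SixAux.classify i with ⟨i', rfl⟩ | ⟨i', rfl⟩ | ⟨i', rfl⟩ | ⟨i', rfl⟩ | ⟨i', rfl⟩ | ⟨i', rfl⟩
      · erw [SixAux.bld_e1] at h1; exact hnoz 0 i' ⟨h1, h2⟩
      · erw [SixAux.bld_e2] at h1; exact hnoz 1 i' ⟨h1, h2⟩
      · erw [SixAux.bld_e3] at h1; exact hnoz 2 i' ⟨h1, h2⟩
      · erw [SixAux.bld_e4] at h1; exact hnoz 3 i' ⟨h1, h2⟩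
      · erw [SixAux.bld_e5] at h1; exact hnoz 4 i' ⟨h1, h2⟩
      · erw [SixAux.bld_e6] at h1; exact hnoz 5 i' ⟨h1, h2⟩
    · have hxrA := (hU (SixAux.bld (w 0) (w 1) (w 2) (w 3) (w 4) (w 5))).2
        (by erw [SixAux.toB_bld w]; exact hwU)
      have hxr'A := (hU (SixAux.bld (w' 0) (w' 1) (w' 2) (w' 3) (w' 4) (w' 5))).2
        (by erw [SixAux.toB_bld w']; exact hw'U)
      refine hPS.2 z (Set.mem_insert _ _) _ (Set.mem_insert_of_mem _ hxrA) _
        (Set.mem_insert_of_mem _ hxr'A) (fun h => hz (h ▸ hxrA)) (fun h => hz (h ▸ hxr'A))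
        (fun h => hww' (by erw [← SixAux.toB_bld w, ← SixAux.toB_bld w', h]; rfl)) ?_
      funext i
      rcases SixAux.classify i with ⟨i', rfl⟩ | ⟨i', rfl⟩ | ⟨i', rfl⟩ | ⟨i', rfl⟩ | ⟨i', rfl⟩ | ⟨i', rfl⟩
      · show z (SixAux.e1 i') + SixAux.bld (w 0) (w 1) (w 2) (w 3) (w 4) (w 5) (SixAux.e1 i') +
          SixAux.bld (w' 0) (w' 1) (w' 2) (w' 3) (w' 4) (w' 5) (SixAux.e1 i') = 0
        erw [SixAux.bld_e1, SixAux.bld_e1]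
        exact congrFun (congrFun hsumB 0) i'
      · show z (SixAux.e2 i') + SixAux.bld (w 0) (w 1) (w 2) (w 3) (w 4) (w 5) (SixAux.e2 i') +
          SixAux.bld (w' 0) (w' 1) (w' 2) (w' 3) (w' 4) (w' 5) (SixAux.e2 i') = 0
        erw [SixAux.bld_e2, SixAux.bld_e2]
        exact congrFun (congrFun hsumB 1) i'
      · show z (SixAux.e3 i') + SixAux.bld (w 0) (w 1) (w 2) (w 3) (w 4) (w 5) (SixAux.e3 i') +
          SixAux.bld (w' 0) (w' 1) (w' 2) (w' 3) (w' 4) (w' 5) (SixAux.e3 i') = 0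
        erw [SixAux.bld_e3, SixAux.bld_e3]
        exact congrFun (congrFun hsumB 2) i'
      · show z (SixAux.e4 i') + SixAux.bld (w 0) (w 1) (w 2) (w 3) (w 4) (w 5) (SixAux.e4 i') +
          SixAux.bld (w' 0) (w' 1) (w' 2) (w' 3) (w' 4) (w' 5) (SixAux.e4 i') = 0
        erw [SixAux.bld_e4, SixAux.bld_e4]
        exact congrFun (congrFun hsumB 3) i'
      · show z (SixAux.e5 i') + SixAux.bld (w 0) (w 1) (w 2) (w 3) (w 4) (w 5) (SixAux.e5 i') +
          SixAux.bld (w' 0) (w' 1) (w' 2) (w' 3) (w' 4) (w' 5) (SixAux.e5 i') = 0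
        erw [SixAux.bld_e5, SixAux.bld_e5]
        exact congrFun (congrFun hsumB 4) i'
      · show z (SixAux.e6 i') + SixAux.bld (w 0) (w 1) (w 2) (w 3) (w 4) (w 5) (SixAux.e6 i') +
          SixAux.bld (w' 0) (w' 1) (w' 2) (w' 3) (w' 4) (w' 5) (SixAux.e6 i') = 0
        erw [SixAux.bld_e6, SixAux.bld_e6]
        exact congrFun (congrFun hsumB 5) i'
  · -- b-saturated
    intro a ha b hb
    have hset : ∀ i', b i' = 0 ↔ a i' = 0 := fun i' => Set.ext_iff.1 hb i'
    have hzz : ∀ j i, SixAux.toB b j i = 0 ↔ SixAux.toB a j i = 0 := by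
      intro j
      fin_cases j <;> intro i
      · exact hset (SixAux.e1 i)
      · exact hset (SixAux.e2 i)
      · exact hset (SixAux.e3 i)
      · exact hset (SixAux.e4 i)
      · exact hset (SixAux.e5 i)
      · exact hset (SixAux.e6 i)
    exact (hU b).2 (SixAux.bw_sat hS' _ ((hU a).1 ha) _ hzz)
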